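/- In the pseudo-Riemannian Lie algebra family, the scalar curvature is τ = −(3/2)(λ₁² + λ₂² − λ₃² − λ₄²), and the following conditions are equivalent: (i) ‖∇P‖² = 0; (ii) τ = 0; (iii) ‖N‖² = 0; (iv) λ₁² + λ₂² − λ₃² − λ₄² = 0. -/

import Mathlib

noncomputable section

/-- The signature `(2,2)` of the pseudo-Riemannian metric: `ε = (1, 1, −1, −1)`. -/
def eps : Fin 4 → ℝ := ![1, 1, -1, -1]

/-- The pseudo-Riemannian metric of signature `(2,2)` with
`g(X₁,X₁) = g(X₂,X₂) = 1`, `g(X₃,X₃) = g(X₄,X₄) = −1` and `g(Xᵢ,Xⱼ) = 0` for `i ≠ j`. -/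
def gP {L : Type*} [AddCommGroup L] [Module ℝ L] (b : Module.Basis (Fin 4) ℝ L) (x y : L) : ℝ :=
  ∑ i, eps i * (b.repr x i * b.repr y i)

/-- The almost product structure `P` with `PX₁ = X₁`, `PX₂ = X₂`, `PX₃ = −X₃`, `PX₄ = −X₄`. -/
def PP {L : Type*} [AddCommGroup L] [Module ℝ L] (b : Module.Basis (Fin 4) ℝ L) : L →ₗ[ℝ] L :=
  b.constr ℝ ![b 0, b 1, -b 2, -b 3]

/-- `(∇ₓP)y = (1/2)([x,Py] − P[x,y])`. -/
def nablaPP {L : Type*} [LieRing L] [LieAlgebra ℝ L] (b : Module.Basis (Fin 4) ℝ L) (x y : L) : L :=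
  (2⁻¹ : ℝ) • (⁅x, PP b y⁆ - PP b ⁅x, y⁆)

/-- `F(x,y,z) = g((∇ₓP)y, z)`. -/
def FP {L : Type*} [LieRing L] [LieAlgebra ℝ L] (b : Module.Basis (Fin 4) ℝ L) (x y z : L) : ℝ :=
  gP b (nablaPP b x y) z

/-- The curvature tensor `R(x,y,z,w) = −(1/4)g([x,y],[z,w])`. -/
def RTP {L : Type*} [LieRing L] [LieAlgebra ℝ L] (b : Module.Basis (Fin 4) ℝ L) (x y z w : L) : ℝ :=
  -(4⁻¹ : ℝ) * gP b ⁅x, y⁆ ⁅z, w⁆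

/-- The Ricci tensor `ρ(y,z) = Σᵢ εᵢ R(Xᵢ,y,z,Xᵢ)`. -/
def ricP {L : Type*} [LieRing L] [LieAlgebra ℝ L] (b : Module.Basis (Fin 4) ℝ L) (y z : L) : ℝ :=
  ∑ i, eps i * RTP b (b i) y z (b i)

/-- The scalar curvature `τ = Σᵢ εᵢ ρ(Xᵢ,Xᵢ)`. -/
def tauP {L : Type*} [LieRing L] [LieAlgebra ℝ L] (b : Module.Basis (Fin 4) ℝ L) : ℝ :=
  ∑ i, eps i * ricP b (b i) (b i)

/-- The Nijenhuis tensor `N(x,y) = [x,y] + P[Px,y] + P[x,Py] − [Px,Py]`. -/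
def NijP {L : Type*} [LieRing L] [LieAlgebra ℝ L] (b : Module.Basis (Fin 4) ℝ L) (x y : L) : L :=
  ⁅x, y⁆ + PP b ⁅PP b x, y⁆ + PP b ⁅x, PP b y⁆ - ⁅PP b x, PP b y⁆

/-- The square norm `‖N‖² = Σᵢₖ εᵢ εₖ g(N(Xᵢ,Xₖ), N(Xᵢ,Xₖ))`. -/
def normNijP {L : Type*} [LieRing L] [LieAlgebra ℝ L] (b : Module.Basis (Fin 4) ℝ L) : ℝ :=
  ∑ i, ∑ k, eps i * eps k * gP b (NijP b (b i) (b k)) (NijP b (b i) (b k))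

/-- The square norm `‖∇P‖² = Σᵢₖ εᵢ εₖ g((∇_{Xᵢ}P)Xₖ, (∇_{Xᵢ}P)Xₖ)`. -/
def normNablaPP {L : Type*} [LieRing L] [LieAlgebra ℝ L] (b : Module.Basis (Fin 4) ℝ L) : ℝ :=
  ∑ i, ∑ k, eps i * eps k * gP b (nablaPP b (b i) (b k)) (nablaPP b (b i) (b k))

/-- In the pseudo-Riemannian family, τ = −(3/2)(λ₁²+λ₂²−λ₃²−λ₄²), and the vanishing of ‖∇P‖², of τ, of ‖N‖², and of λ₁²+λ₂²−λ₃²−λ₄² are all equivalent. -/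
theorem scalar_curvature_and_isotropy_pseudoRiemannian
    (L : Type*) [LieRing L] [LieAlgebra ℝ L] (b : Module.Basis (Fin 4) ℝ L)
    (l1 l2 l3 l4 : ℝ)
    (h12 : ⁅b 0, b 1⁆ = l2 • b 2 - l1 • b 3)
    (h13 : ⁅b 0, b 2⁆ = l2 • b 1 + l4 • b 3)
    (h14 : ⁅b 0, b 3⁆ = -(l1 • b 1) - l4 • b 2)
    (h23 : ⁅b 1, b 2⁆ = -(l2 • b 0) - l3 • b 3)
    (h24 : ⁅b 1, b 3⁆ = l1 • b 0 + l3 • b 2)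
    (h34 : ⁅b 2, b 3⁆ = -(l4 • b 0) + l3 • b 1)
    : tauP b = -(3 / 2) * (l1 ^ 2 + l2 ^ 2 - l3 ^ 2 - l4 ^ 2) ∧
      ((normNablaPP b = 0 ↔ tauP b = 0) ∧
       (tauP b = 0 ↔ normNijP b = 0) ∧
       (normNijP b = 0 ↔ l1 ^ 2 + l2 ^ 2 - l3 ^ 2 - l4 ^ 2 = 0)) := by
  have h21 : ⁅b 1, b 0⁆ = -(l2 • b 2 - l1 • b 3) := by rw [← lie_skew, h12]
  have h31 : ⁅b 2, b 0⁆ = -(l2 • b 1 + l4 • b 3) := by rw [← lie_skew, h13]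
  have h41 : ⁅b 3, b 0⁆ = -(-(l1 • b 1) - l4 • b 2) := by rw [← lie_skew, h14]
  have h32 : ⁅b 2, b 1⁆ = -(-(l2 • b 0) - l3 • b 3) := by rw [← lie_skew, h23]
  have h42 : ⁅b 3, b 1⁆ = -(l1 • b 0 + l3 • b 2) := by rw [← lie_skew, h24]
  have h43 : ⁅b 3, b 2⁆ = -(-(l4 • b 0) + l3 • b 1) := by rw [← lie_skew, h34]
  have htau : tauP b = -(3 / 2) * (l1 ^ 2 + l2 ^ 2 - l3 ^ 2 - l4 ^ 2) := by
    simp only [tauP, ricP, RTP, gP, Fin.sum_univ_four, eps, Matrix.cons_val_zero,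
      Matrix.cons_val_one, Matrix.head_cons, Matrix.cons_val_two, Matrix.tail_cons,
      Matrix.cons_val_three, h12, h13, h14, h23, h24, h34, h21, h31, h41, h32, h42, h43,
      lie_self, lie_smul, smul_lie, lie_add, add_lie, lie_sub, sub_lie, lie_neg, neg_lie,
      map_add, map_sub, map_neg, map_smul, Module.Basis.repr_self, Finsupp.smul_apply,
      Finsupp.add_apply, Finsupp.sub_apply, Finsupp.neg_apply, Finsupp.single_apply,
      smul_eq_mul]
    simp
    try ring
  have hnP : normNablaPP b = -4 * (l1 ^ 2 + l2 ^ 2 - l3 ^ 2 - l4 ^ 2) := by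
    simp only [normNablaPP, nablaPP, PP, gP, Fin.sum_univ_four, eps, Module.Basis.constr_basis,
      Matrix.cons_val_zero, Matrix.cons_val_one, Matrix.head_cons, Matrix.cons_val_two,
      Matrix.tail_cons, Matrix.cons_val_three,
      h12, h13, h14, h23, h24, h34, h21, h31, h41, h32, h42, h43,
      lie_self, lie_smul, smul_lie, lie_add, add_lie, lie_sub, sub_lie, lie_neg, neg_lie,
      map_add, map_sub, map_neg, map_smul, smul_add, smul_sub, smul_neg,
      Module.Basis.repr_self, Finsupp.smul_apply,
      Finsupp.add_apply, Finsupp.sub_apply, Finsupp.neg_apply, Finsupp.single_apply,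
      smul_eq_mul]
    simp
    try ring
  have hnN : normNijP b = -24 * (l1 ^ 2 + l2 ^ 2 - l3 ^ 2 - l4 ^ 2) := by
    simp only [normNijP, NijP, PP, gP, Fin.sum_univ_four, eps, Module.Basis.constr_basis,
      Matrix.cons_val_zero, Matrix.cons_val_one, Matrix.head_cons, Matrix.cons_val_two,
      Matrix.tail_cons, Matrix.cons_val_three,
      h12, h13, h14, h23, h24, h34, h21, h31, h41, h32, h42, h43,
      lie_self, lie_smul, smul_lie, lie_add, add_lie, lie_sub, sub_lie, lie_neg, neg_lie,
      map_add, map_sub, map_neg, map_smul, smul_add, smul_sub, smul_neg,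
      Module.Basis.repr_self, Finsupp.smul_apply,
      Finsupp.add_apply, Finsupp.sub_apply, Finsupp.neg_apply, Finsupp.single_apply,
      smul_eq_mul]
    simp
    try ring
  refine ⟨htau, ?_, ?_, ?_⟩ <;> simp only [htau, hnP, hnN] <;>
    constructor <;> intro h <;> linarith
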